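/- Let g be a homogeneous polynomial of degree 4 on ℝ². Then |G₁(g)| < +∞ if and only if G₁(g) = {(x,y) ∈ ℝ² : g(x,y) ≤ 1} is bounded. Moreover, the set 𝔽₄(ℝ²) of homogeneous degree-4 polynomials in two variables with |G₁(g)| < +∞ is an open subset of the space of homogeneous degree-4 polynomials in two variables. In particular, for g(x,y) = a x⁴ + 2b x²y² + c y⁴, one has |G₁(g)| < +∞ if and only if a > 0, c > 0 and b > −√(ac), and this holds if and only if G₁(g) is bounded. -/

import Mathlib

open MeasureTheory Pointwise

noncomputable section

/-- `G₁(g) = {x ∈ ℝⁿ : g(x) ≤ 1}`, the sublevel set of a polynomial at level 1. -/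
def G1 {n : ℕ} (g : MvPolynomial (Fin n) ℝ) : Set (Fin n → ℝ) :=
  {x | MvPolynomial.eval x g ≤ 1}

/-- The canonical form `a x⁴ + 2b x²y² + c y⁴` of a degree-4 homogeneous polynomial on `ℝ²`. -/
def canon (a b c : ℝ) : MvPolynomial (Fin 2) ℝ :=
  MvPolynomial.C a * MvPolynomial.X 0 ^ 4 +
    MvPolynomial.C (2 * b) * MvPolynomial.X 0 ^ 2 * MvPolynomial.X 1 ^ 2 +
    MvPolynomial.C c * MvPolynomial.X 1 ^ 4

/-- Lemma 2.3 (3) of the paper: for degree-4 homogeneous polynomials on `ℝ²`, finiteness of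
`|G₁(g)|` is equivalent to boundedness of `G₁(g)`; `𝔽₄(ℝ²)` is open (in the coefficient
topology); and for the canonical form `a x⁴ + 2b x²y² + c y⁴` both are equivalent to
`a > 0`, `c > 0` and `b > -√(ac)`. -/

def Fq (c : ℕ → ℝ) (x y : ℝ) : ℝ :=
  c 0 * y^4 + c 1 * x*y^3 + c 2 * x^2*y^2 + c 3 * x^3*y + c 4 * x^4

def Gq (c : ℕ → ℝ) (z : Fin 2 → ℝ) : ℝ := Fq c (z 0) (z 1)

def Sq (c : ℕ → ℝ) : Set (Fin 2 → ℝ) := {z | Gq c z ≤ 1}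

def PD (c : ℕ → ℝ) : Prop := ∀ z : Fin 2 → ℝ, z ≠ 0 → 0 < Gq c z

lemma Fq_homog (c : ℕ → ℝ) (t x y : ℝ) : Fq c (t*x) (t*y) = t^4 * Fq c x y := by
  simp only [Fq]; ring

lemma Gq_cont (c : ℕ → ℝ) : Continuous (Gq c) := by
  unfold Gq Fq; fun_prop

lemma Gq_smul (c : ℕ → ℝ) (t : ℝ) (z : Fin 2 → ℝ) : Gq c (t • z) = t^4 * Gq c z := by
  simp only [Gq, Pi.smul_apply, smul_eq_mul]
  exact Fq_homog c t (z 0) (z 1)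

lemma ne_zero_iff (z : Fin 2 → ℝ) : z ≠ 0 ↔ (z 0 ≠ 0 ∨ z 1 ≠ 0) := by
  constructor
  · intro h
    by_contra hc
    push_neg at hc
    exact h (funext fun i => by fin_cases i <;> simp [hc.1, hc.2])
  · rintro (h | h) hz <;> simp [hz] at h

lemma exists_min {c : ℕ → ℝ} (h : PD c) :
    ∃ m > 0, ∀ z : Fin 2 → ℝ, ‖z‖ = 1 → m ≤ Gq c z := by
  have hne : (Metric.sphere (0 : Fin 2 → ℝ) 1).Nonempty :=
    NormedSpace.sphere_nonempty.2 zero_le_one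
  obtain ⟨z0, hz0, hmin⟩ := (isCompact_sphere (0 : Fin 2 → ℝ) 1).exists_isMinOn hne
    (Gq_cont c).continuousOn
  have hz0n : ‖z0‖ = 1 := by simpa using mem_sphere_zero_iff_norm.1 hz0
  refine ⟨Gq c z0, h z0 (by intro h0; rw [h0] at hz0n; simp at hz0n), ?_⟩
  intro z hz
  exact hmin (mem_sphere_zero_iff_norm.2 hz)

lemma Gq_scale {c : ℕ → ℝ} {z : Fin 2 → ℝ} (hz : z ≠ 0) :
    Gq c z = ‖z‖^4 * Gq c (‖z‖⁻¹ • z) := by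
  have hn : ‖z‖ ≠ 0 := norm_ne_zero_iff.2 hz
  rw [← Gq_smul, smul_smul, mul_inv_cancel₀ hn, one_smul]

lemma norm_inv_smul {z : Fin 2 → ℝ} (hz : z ≠ 0) : ‖(‖z‖⁻¹ • z)‖ = 1 := by
  have hn : ‖z‖ ≠ 0 := norm_ne_zero_iff.2 hz
  rw [norm_smul, norm_inv, norm_norm, inv_mul_cancel₀ hn]

lemma pd_bounded {c : ℕ → ℝ} (h : PD c) : Bornology.IsBounded (Sq c) := by
  obtain ⟨m, hm, hmin⟩ := exists_min h
  rw [isBounded_iff_forall_norm_le]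
  refine ⟨max 1 (1/m), fun z hz => ?_⟩
  rcases eq_or_ne z 0 with rfl | hz0
  · exact le_max_of_le_left (by simp)
  · have h1 : m * ‖z‖^4 ≤ 1 := by
      have := hmin _ (norm_inv_smul hz0)
      have h2 : Gq c z ≤ 1 := hz
      rw [Gq_scale hz0] at h2
      nlinarith [norm_nonneg z, pow_nonneg (norm_nonneg z) 4]
    rcases le_or_gt ‖z‖ 1 with h | h
    · exact le_max_of_le_left h
    · refine le_max_of_le_right ?_
      have h4 : ‖z‖ ≤ ‖z‖^4 := le_self_pow₀ h.le (by norm_num)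
      rw [le_div_iff₀ hm]
      nlinarith

lemma bounded_finite {S : Set (Fin 2 → ℝ)} (h : Bornology.IsBounded S) : volume S < ⊤ := by
  obtain ⟨R, hR⟩ := h.subset_closedBall 0
  calc volume S ≤ volume (Metric.closedBall 0 R) := measure_mono hR
    _ < ⊤ := (isCompact_closedBall 0 R).measure_lt_top

lemma not_pd_unbounded {c : ℕ → ℝ} (h : ¬ PD c) : ¬ Bornology.IsBounded (Sq c) := by
  simp only [PD, not_forall] at h
  obtain ⟨v, hv, hle⟩ := h
  push_neg at hle
  intro hb
  rw [isBounded_iff_forall_norm_le] at hb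
  obtain ⟨R, hR⟩ := hb
  have hvn : 0 < ‖v‖ := norm_pos_iff.2 hv
  set t : ℝ := (|R| + 1) / ‖v‖ with ht
  have ht0 : 0 ≤ t := div_nonneg (by positivity) hvn.le
  have hmem : t • v ∈ Sq c := by
    show Gq c (t • v) ≤ 1
    rw [Gq_smul]
    nlinarith [pow_nonneg ht0 4, hle]
  have := hR _ hmem
  rw [norm_smul, Real.norm_eq_abs, abs_of_nonneg ht0, div_mul_cancel₀ _ hvn.ne'] at this
  nlinarith [le_abs_self R]

lemma cone_top {c : ℕ → ℝ} {w : Fin 2 → ℝ} (hw : Gq c w < 0) : volume (Sq c) = ⊤ := by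
  set U : Set (Fin 2 → ℝ) := {z | Gq c z < 0} with hU
  have hUopen : IsOpen U := isOpen_lt (Gq_cont c) continuous_const
  have hUpos : 0 < volume U := hUopen.measure_pos volume ⟨w, hw⟩
  have hsmul : (2:ℝ) • U ⊆ U := by
    rintro z ⟨u, hu, rfl⟩
    show Gq c ((2:ℝ) • u) < 0
    have hu' : Gq c u < 0 := hu
    rw [Gq_smul]
    nlinarith
  have hUtop : volume U = ⊤ := by
    by_contra hne
    have h2 : volume ((2:ℝ) • U) = 4 * volume U := by
      rw [Measure.addHaar_smul]
      congr 1
      rw [show Module.finrank ℝ (Fin 2 → ℝ) = 2 by simp]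
      rw [show |(2:ℝ)^2| = 4 by norm_num]
      simp [ENNReal.ofReal_ofNat]
    have hle : volume ((2:ℝ) • U) ≤ volume U := measure_mono hsmul
    rw [h2] at hle
    have hvU := lt_top_iff_ne_top.2 hne
    have : (4:ENNReal) * volume U ≤ 1 * volume U := by simpa using hle
    have := ENNReal.mul_le_mul_iff_left hUpos.ne' hvU.ne |>.1 this
    norm_num at this
  refine top_le_iff.1 ?_
  rw [← hUtop]
  exact measure_mono (fun z hz => show Gq c z ≤ 1 from (le_of_lt hz).trans zero_le_one)

lemma boxes_top {S : Set (Fin 2 → ℝ)} {δ : ℝ} (hδ : 0 < δ)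
    (hsub : ∀ z : Fin 2 → ℝ, 1 ≤ z 0 → |z 1| ≤ δ → |z 1| * z 0 ≤ δ → z ∈ S) :
    volume S = ⊤ := by
  set B : ℕ → Set (Fin 2 → ℝ) := fun k =>
    Set.univ.pi ![Set.Ico ((2:ℝ)^k) (2^(k+1)), Set.Icc (-(δ/2^(k+1))) (δ/2^(k+1))] with hB
  have hmem : ∀ k (z : Fin 2 → ℝ), z ∈ B k ↔
      z 0 ∈ Set.Ico ((2:ℝ)^k) (2^(k+1)) ∧ z 1 ∈ Set.Icc (-(δ/2^(k+1))) (δ/2^(k+1)) := by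
    intro k z
    simp only [hB, Set.mem_pi, Set.mem_univ, forall_true_left]
    constructor
    · intro h; exact ⟨h 0, h 1⟩
    · rintro ⟨h0, h1⟩ i; fin_cases i <;> simpa
  have hBS : ∀ k, B k ⊆ S := by
    intro k z hz
    rw [hmem] at hz
    obtain ⟨⟨h0l, h0r⟩, h1l, h1r⟩ := hz
    have h2k : (1:ℝ) ≤ 2^k := one_le_pow₀ (by norm_num)
    have h2k1 : (1:ℝ) ≤ 2^(k+1) := one_le_pow₀ (by norm_num)
    have habs : |z 1| ≤ δ/2^(k+1) := abs_le.2 ⟨h1l, h1r⟩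
    refine hsub z (le_trans h2k h0l) ?_ ?_
    · calc |z 1| ≤ δ/2^(k+1) := habs
        _ ≤ δ := by rw [div_le_iff₀ (by positivity)]; nlinarith
    · calc |z 1| * z 0 ≤ (δ/2^(k+1)) * 2^(k+1) :=
          mul_le_mul habs h0r.le (by linarith) (by positivity)
        _ = δ := div_mul_cancel₀ _ (by positivity)
  have hdisj : Pairwise (Function.onFun Disjoint B) := by
    intro k l hkl
    rw [Function.onFun, Set.disjoint_left]
    intro z hzk hzl
    rw [hmem] at hzk hzl
    rcases lt_or_gt_of_ne hkl with h | h
    · have : (2:ℝ)^(k+1) ≤ 2^l := pow_le_pow_right₀ (by norm_num) h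
      linarith [hzk.1.2, hzl.1.1]
    · have : (2:ℝ)^(l+1) ≤ 2^k := pow_le_pow_right₀ (by norm_num) h
      linarith [hzl.1.2, hzk.1.1]
  have hBmeas : ∀ k, MeasurableSet (B k) := by
    intro k
    apply MeasurableSet.univ_pi
    intro i
    fin_cases i
    · exact measurableSet_Ico
    · exact measurableSet_Icc
  have hvol : ∀ k, volume (B k) = ENNReal.ofReal δ := by
    intro k
    rw [hB]
    rw [volume_pi_pi]
    rw [Fin.prod_univ_two]
    simp only [Matrix.cons_val_zero, Matrix.cons_val_one, Matrix.head_cons]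
    rw [Real.volume_Ico, Real.volume_Icc]
    rw [show ((2:ℝ)^(k+1) - 2^k) = 2^k by ring]
    rw [show (δ/2^(k+1) - -(δ/2^(k+1))) = δ/2^k by field_simp; ring]
    rw [← ENNReal.ofReal_mul (by positivity)]
    congr 1
    field_simp
  have : volume (⋃ k, B k) = ⊤ := by
    rw [measure_iUnion hdisj hBmeas]
    simp only [hvol]
    exact ENNReal.tsum_const_eq_top_of_ne_zero (by simp [hδ])
  refine top_le_iff.1 ?_
  rw [← this]
  exact measure_mono (Set.iUnion_subset hBS)

lemma dcore_arith {c0 c1 c2 δ a b : ℝ} (hδpos : 0 < δ) (hδ1 : δ ≤ 1)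
    (hδK : δ * (|c0| + |c1| + |c2| + 1) ≤ 1) (h0 : 1 ≤ a) (h1 : |b| ≤ δ)
    (h01 : |b| * a ≤ δ) :
    c0 * b^4 + c1 * (a*b^3) + c2 * (a^2*b^2) ≤ 1 := by
  have ha : (0:ℝ) < a := lt_of_lt_of_le one_pos h0
  have hδ2 : δ^2 ≤ δ := by nlinarith
  have habδ : |a*b| ≤ δ := by
    rw [abs_mul, abs_of_pos ha]; rw [mul_comm]; exact h01
  have t0 : |c0 * b^4| ≤ |c0| * δ^2 := by
    rw [abs_mul]
    apply mul_le_mul_of_nonneg_left _ (abs_nonneg _)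
    rw [abs_pow]
    calc |b|^4 ≤ δ^4 := pow_le_pow_left₀ (abs_nonneg b) h1 4
      _ ≤ δ^2 := by nlinarith [sq_nonneg δ]
  have t1 : |c1 * (a*b^3)| ≤ |c1| * δ^2 := by
    rw [abs_mul]
    apply mul_le_mul_of_nonneg_left _ (abs_nonneg _)
    have e : |a*b^3| = |a*b| * b^2 := by
      rw [show a*b^3 = (a*b)*b^2 by ring, abs_mul, abs_of_nonneg (sq_nonneg b)]
    rw [e]
    calc |a*b| * b^2 ≤ δ * δ^2 := by
          apply mul_le_mul habδ _ (sq_nonneg b) hδpos.le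
          calc b^2 = |b|^2 := (sq_abs b).symm
            _ ≤ δ^2 := pow_le_pow_left₀ (abs_nonneg b) h1 2
      _ ≤ δ^2 := by nlinarith [sq_nonneg δ]
  have t2 : |c2 * (a^2*b^2)| ≤ |c2| * δ^2 := by
    rw [abs_mul]
    apply mul_le_mul_of_nonneg_left _ (abs_nonneg _)
    have : a^2*b^2 = (a*b)^2 := by ring
    rw [this, abs_pow]
    exact pow_le_pow_left₀ (abs_nonneg _) habδ 2
  have tri : c0 * b^4 + c1 * (a*b^3) + c2 * (a^2*b^2)
      ≤ |c0| * δ^2 + |c1| * δ^2 + |c2| * δ^2 := by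
    have l0 := le_abs_self (c0 * b^4)
    have l1 := le_abs_self (c1 * (a*b^3))
    have l2 := le_abs_self (c2 * (a^2*b^2))
    linarith
  have final : |c0| * δ^2 + |c1| * δ^2 + |c2| * δ^2 ≤ 1 := by
    nlinarith [abs_nonneg c0, abs_nonneg c1, abs_nonneg c2, hδpos, hδ2]
  linarith

lemma dcore {c : ℕ → ℝ} (h3 : c 3 = 0) (h4 : c 4 = 0) : volume (Sq c) = ⊤ := by
  have hKpos : (0:ℝ) < |c 0| + |c 1| + |c 2| + 1 := by positivity
  obtain ⟨δ, hδpos, hδ1, hδK⟩ :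
      ∃ δ : ℝ, 0 < δ ∧ δ ≤ 1 ∧ δ * (|c 0| + |c 1| + |c 2| + 1) ≤ 1 := by
    refine ⟨min 1 (1/(|c 0| + |c 1| + |c 2| + 1)), lt_min one_pos (by positivity),
      min_le_left _ _, ?_⟩
    calc min 1 (1/(|c 0| + |c 1| + |c 2| + 1)) * (|c 0| + |c 1| + |c 2| + 1)
        ≤ (1/(|c 0| + |c 1| + |c 2| + 1)) * (|c 0| + |c 1| + |c 2| + 1) :=
          mul_le_mul_of_nonneg_right (min_le_right _ _) hKpos.le
      _ = 1 := by field_simp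
  apply boxes_top hδpos
  intro z h0 h1 h01
  show Fq c (z 0) (z 1) ≤ 1
  rw [Fq, h3, h4]
  have := dcore_arith (c0 := c 0) (c1 := c 1) (c2 := c 2) hδpos hδ1 hδK h0 h1 h01
  nlinarith [this]

lemma signlem {a b c d : ℝ} (h : ∀ s : ℝ, 0 ≤ a*s^4 + b*s^3 + c*s^2 + d*s) : d = 0 := by
  by_contra hd
  have hd2 : 0 < d^2 := by positivity
  have hMpos : (0:ℝ) < |a| * d^2 + |b| * |d| + |c| + 1 := by positivity
  set M : ℝ := |a| * d^2 + |b| * |d| + |c| + 1 with hM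
  obtain ⟨ε, hεpos, hε1, hεM⟩ : ∃ ε : ℝ, 0 < ε ∧ ε ≤ 1 ∧ ε * M ≤ 1/2 := by
    refine ⟨min 1 (1/(2*M)), lt_min one_pos (by positivity), min_le_left _ _, ?_⟩
    calc min 1 (1/(2*M)) * M ≤ (1/(2*M)) * M :=
        mul_le_mul_of_nonneg_right (min_le_right _ _) hMpos.le
      _ = 1/2 := by field_simp
  have hs := h (-(ε*d))
  have expand : a*(-(ε*d))^4 + b*(-(ε*d))^3 + c*(-(ε*d))^2 + d*(-(ε*d))
      = ε*d^2 * ((a*ε^2*d^2)*ε - (b*ε*d)*ε + c*ε - 1) := by ring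
  rw [expand] at hs
  have t1 : (a*ε^2*d^2)*ε ≤ (|a| * d^2) * ε := by
    have h1 : a*ε^2*d^2 ≤ |a| * d^2 := by
      have : a*ε^2*d^2 ≤ |a| * ε^2 * d^2 := by nlinarith [le_abs_self a, sq_nonneg d, sq_nonneg ε]
      have h2 : ε^2 ≤ 1 := by nlinarith
      nlinarith [mul_nonneg (abs_nonneg a) (sq_nonneg d), h2]
    exact mul_le_mul_of_nonneg_right h1 hεpos.le
  have t2 : -((b*ε*d)*ε) ≤ (|b| * |d|) * ε := by
    have h1 : -(b*ε*d) ≤ |b| * |d| := by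
      have habs : -(b*ε*d) ≤ |b*ε*d| := neg_le_abs _
      rw [abs_mul, abs_mul, abs_of_pos hεpos] at habs
      nlinarith [abs_nonneg b, abs_nonneg d, mul_nonneg (abs_nonneg b) (abs_nonneg d)]
    nlinarith [hεpos]
  have t3 : c*ε ≤ |c| * ε := mul_le_mul_of_nonneg_right (le_abs_self c) hεpos.le
  have hbr : (a*ε^2*d^2)*ε - (b*ε*d)*ε + c*ε - 1 < 0 := by
    have hsum : (a*ε^2*d^2)*ε - (b*ε*d)*ε + c*ε ≤ M * ε := by
      rw [hM]; nlinarith [hεpos]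
    nlinarith [hεM]
  nlinarith [mul_pos hεpos hd2, hs, hbr]

def shearC (c : ℕ → ℝ) (m : ℝ) : ℕ → ℝ := fun i =>
  match i with
  | 0 => c 0
  | 1 => 4*c 0*m + c 1
  | 2 => 6*c 0*m^2 + 3*c 1*m + c 2
  | 3 => 4*c 0*m^3 + 3*c 1*m^2 + 2*c 2*m + c 3
  | 4 => c 0*m^4 + c 1*m^3 + c 2*m^2 + c 3*m + c 4
  | _ => 0

lemma shear_eval (c : ℕ → ℝ) (m x y : ℝ) :
    Fq (shearC c m) x y = Fq c x (y + m*x) := by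
  simp only [Fq, shearC]
  ring

def revC (c : ℕ → ℝ) : ℕ → ℝ := fun i => c (4 - i)

lemma rev_eval (c : ℕ → ℝ) (x y : ℝ) : Fq (revC c) x y = Fq c y x := by
  simp only [Fq, revC]
  norm_num
  ring

lemma shear_vol (c : ℕ → ℝ) (m : ℝ) : volume (Sq (shearC c m)) = volume (Sq c) := by
  set T : (Fin 2 → ℝ) →ₗ[ℝ] (Fin 2 → ℝ) := Matrix.toLin' !![(1:ℝ), 0; m, 1] with hT
  have hdet : LinearMap.det T = 1 := by
    rw [hT, LinearMap.det_toLin', Matrix.det_fin_two_of]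
    ring
  have happ : ∀ z : Fin 2 → ℝ, T z 0 = z 0 ∧ T z 1 = m * z 0 + z 1 := by
    intro z
    rw [hT]
    constructor <;>
    · simp [Matrix.toLin'_apply, Matrix.mulVec, dotProduct, Fin.sum_univ_two, Matrix.vecHead, Matrix.vecTail]
  have hpre : Sq (shearC c m) = T ⁻¹' (Sq c) := by
    ext z
    show Gq (shearC c m) z ≤ 1 ↔ Gq c (T z) ≤ 1
    rw [Gq, Gq, (happ z).1, (happ z).2, shear_eval]
    rw [show z 1 + m * z 0 = m * z 0 + z 1 by ring]
  rw [hpre, Measure.addHaar_preimage_linearMap volume (by rw [hdet]; norm_num), hdet]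
  norm_num

lemma rev_vol (c : ℕ → ℝ) : volume (Sq (revC c)) = volume (Sq c) := by
  set T : (Fin 2 → ℝ) →ₗ[ℝ] (Fin 2 → ℝ) := Matrix.toLin' !![(0:ℝ), 1; 1, 0] with hT
  have hdet : LinearMap.det T = -1 := by
    rw [hT, LinearMap.det_toLin', Matrix.det_fin_two_of]
    ring
  have happ : ∀ z : Fin 2 → ℝ, T z 0 = z 1 ∧ T z 1 = z 0 := by
    intro z
    rw [hT]
    constructor <;>
    · simp [Matrix.toLin'_apply, Matrix.mulVec, dotProduct, Fin.sum_univ_two, Matrix.vecHead, Matrix.vecTail]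
  have hpre : Sq (revC c) = T ⁻¹' (Sq c) := by
    ext z
    show Gq (revC c) z ≤ 1 ↔ Gq c (T z) ≤ 1
    rw [Gq, Gq, (happ z).1, (happ z).2, rev_eval]
  rw [hpre, Measure.addHaar_preimage_linearMap volume (by rw [hdet]; norm_num), hdet]
  norm_num

lemma d2 {c : ℕ → ℝ} (h0 : ∀ x y : ℝ, 0 ≤ Fq c x y) (h4 : c 4 = 0) :
    volume (Sq c) = ⊤ := by
  have h3 : c 3 = 0 := by
    apply signlem (a := c 0) (b := c 1) (c := c 2) (d := c 3)
    intro s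
    have := h0 1 s
    rw [Fq] at this
    nlinarith [this, h4]
  exact dcore h3 h4

lemma not_pd_top {c : ℕ → ℝ} (h : ¬ PD c) : volume (Sq c) = ⊤ := by
  simp only [PD, not_forall] at h
  obtain ⟨v, hv, hle⟩ := h
  push_neg at hle
  by_cases hneg : ∃ w : Fin 2 → ℝ, Gq c w < 0
  · obtain ⟨w, hw⟩ := hneg
    exact cone_top hw
  · push_neg at hneg
    have hpos : ∀ x y : ℝ, 0 ≤ Fq c x y := by
      intro x y
      have := hneg ![x, y]
      simpa [Gq] using this
    have hveq : Gq c v = 0 := le_antisymm hle (hneg v)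
    rw [ne_zero_iff] at hv
    by_cases h0 : v 0 = 0
    · have h1 : v 1 ≠ 0 := by tauto
      have hc0 : Fq c 0 1 = 0 := by
        have := Fq_homog c (v 1)⁻¹ (v 0) (v 1)
        rw [show (v 1)⁻¹ * v 0 = 0 by rw [h0]; ring, inv_mul_cancel₀ h1] at this
        rw [this]
        rw [show Fq c (v 0) (v 1) = Gq c v from rfl, hveq]
        ring
      have hrev4 : revC c 4 = 0 := by
        have : Fq c 0 1 = c 0 := by rw [Fq]; ring
        rw [this] at hc0
        simpa [revC] using hc0
      have := d2 (c := revC c) (fun x y => by rw [rev_eval]; exact hpos y x) hrev4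
      rw [rev_vol] at this
      exact this
    · set m : ℝ := v 1 / v 0 with hm
      have hc4 : Fq c 1 m = 0 := by
        have := Fq_homog c (v 0)⁻¹ (v 0) (v 1)
        rw [inv_mul_cancel₀ h0, show (v 0)⁻¹ * v 1 = m by rw [hm]; field_simp] at this
        rw [this]
        rw [show Fq c (v 0) (v 1) = Gq c v from rfl, hveq]
        ring
      have hs4 : shearC c m 4 = 0 := by
        rw [show shearC c m 4 = c 0*m^4 + c 1*m^3 + c 2*m^2 + c 3*m + c 4 from rfl]
        rw [Fq] at hc4
        nlinarith [hc4]
      have := d2 (c := shearC c m) (fun x y => by rw [shear_eval]; exact hpos x _) hs4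
      rw [shear_vol] at this
      exact this

lemma pd_iff_fin {c : ℕ → ℝ} : volume (Sq c) < ⊤ ↔ PD c := by
  constructor
  · intro h
    by_contra hpd
    rw [not_pd_top hpd] at h
    exact absurd h (lt_irrefl _)
  · intro h
    exact bounded_finite (pd_bounded h)

lemma pd_iff_bdd {c : ℕ → ℝ} : Bornology.IsBounded (Sq c) ↔ PD c := by
  constructor
  · intro h
    by_contra hpd
    exact not_pd_unbounded hpd h
  · exact pd_bounded

lemma pd_open {c : ℕ → ℝ} (h : PD c) :
    ∃ ε > (0:ℝ), ∀ c' : ℕ → ℝ, (∀ i, |c' i - c i| < ε) → PD c' := by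
  obtain ⟨m, hm, hmin⟩ := exists_min h
  refine ⟨m/6, by positivity, fun c' hc' z hz => ?_⟩
  have hw1 : ‖(‖z‖⁻¹ • z)‖ = 1 := norm_inv_smul hz
  set w := ‖z‖⁻¹ • z with hwdef
  have hw0 : |w 0| ≤ 1 := by rw [← Real.norm_eq_abs, ← hw1]; exact norm_le_pi_norm w 0
  have hw1' : |w 1| ≤ 1 := by rw [← Real.norm_eq_abs, ← hw1]; exact norm_le_pi_norm w 1
  have hdiff : |Gq c' w - Gq c w| < 5 * (m/6) := by
    have e : Gq c' w - Gq c w =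
        (c' 0 - c 0) * (w 1)^4 + (c' 1 - c 1) * ((w 0)*(w 1)^3) +
        (c' 2 - c 2) * ((w 0)^2*(w 1)^2) + (c' 3 - c 3) * ((w 0)^3*(w 1)) +
        (c' 4 - c 4) * (w 0)^4 := by
      simp only [Gq, Fq]; ring
    have mono : ∀ (i j : ℕ), |w 0 ^ i * w 1 ^ j| ≤ 1 := by
      intro i j
      rw [abs_mul, abs_pow, abs_pow]
      exact mul_le_one₀ (pow_le_one₀ (abs_nonneg _) hw0) (pow_nonneg (abs_nonneg _) _)
        (pow_le_one₀ (abs_nonneg _) hw1')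
    have bnd : ∀ (k : ℕ) (t : ℝ), |t| ≤ 1 → |(c' k - c k) * t| < m/6 := by
      intro k t ht
      rw [abs_mul]
      calc |c' k - c k| * |t| ≤ |c' k - c k| * 1 :=
          mul_le_mul_of_nonneg_left ht (abs_nonneg _)
        _ = |c' k - c k| := mul_one _
        _ < m/6 := hc' k
    rw [e]
    have b0 := bnd 0 ((w 1)^4) (by simpa using mono 0 4)
    have b1 := bnd 1 ((w 0)*(w 1)^3) (by simpa using mono 1 3)
    have b2 := bnd 2 ((w 0)^2*(w 1)^2) (mono 2 2)
    have b3 := bnd 3 ((w 0)^3*(w 1)) (by simpa using mono 3 1)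
    have b4 := bnd 4 ((w 0)^4) (by simpa using mono 4 0)
    calc |(c' 0 - c 0) * (w 1)^4 + (c' 1 - c 1) * ((w 0)*(w 1)^3) +
        (c' 2 - c 2) * ((w 0)^2*(w 1)^2) + (c' 3 - c 3) * ((w 0)^3*(w 1)) +
        (c' 4 - c 4) * (w 0)^4|
        ≤ |(c' 0 - c 0) * (w 1)^4| + |(c' 1 - c 1) * ((w 0)*(w 1)^3)| +
          |(c' 2 - c 2) * ((w 0)^2*(w 1)^2)| + |(c' 3 - c 3) * ((w 0)^3*(w 1))| +
          |(c' 4 - c 4) * (w 0)^4| := by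
            have a1 := abs_add_le ((c' 0 - c 0) * (w 1)^4 + (c' 1 - c 1) * ((w 0)*(w 1)^3) +
              (c' 2 - c 2) * ((w 0)^2*(w 1)^2) + (c' 3 - c 3) * ((w 0)^3*(w 1)))
              ((c' 4 - c 4) * (w 0)^4)
            have a2 := abs_add_le ((c' 0 - c 0) * (w 1)^4 + (c' 1 - c 1) * ((w 0)*(w 1)^3) +
              (c' 2 - c 2) * ((w 0)^2*(w 1)^2)) ((c' 3 - c 3) * ((w 0)^3*(w 1)))
            have a3 := abs_add_le ((c' 0 - c 0) * (w 1)^4 + (c' 1 - c 1) * ((w 0)*(w 1)^3))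
              ((c' 2 - c 2) * ((w 0)^2*(w 1)^2))
            have a4 := abs_add_le ((c' 0 - c 0) * (w 1)^4) ((c' 1 - c 1) * ((w 0)*(w 1)^3))
            linarith
      _ < 5 * (m/6) := by linarith
  have hwpos : 0 < Gq c' w := by
    have hmw := hmin w hw1
    have : Gq c w - |Gq c' w - Gq c w| ≤ Gq c' w := by
      have := neg_abs_le (Gq c' w - Gq c w)
      linarith
    linarith
  rw [Gq_scale hz]
  have : 0 < ‖z‖ := norm_pos_iff.2 hz
  positivity

lemma fin2_degree (d : Fin 2 →₀ ℕ) : d.degree = d 0 + d 1 := by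
  rw [Finsupp.degree_apply]
  rw [Finset.sum_subset (Finset.subset_univ d.support)]
  · exact Fin.sum_univ_two d
  · intro x _ hx
    exact Finsupp.notMem_support_iff.1 hx

lemma fin2_eq (d : Fin 2 →₀ ℕ) :
    d = Finsupp.single 0 (d 0) + Finsupp.single 1 (d 1) := by
  ext i
  fin_cases i <;> simp [Finsupp.single_apply]

def cOf (g : MvPolynomial (Fin 2) ℝ) : ℕ → ℝ :=
  fun i => g.coeff (Finsupp.single 0 i + Finsupp.single 1 (4 - i))

lemma repr4 (g : MvPolynomial (Fin 2) ℝ) (hg : g.IsHomogeneous 4) (x : Fin 2 → ℝ) :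
    MvPolynomial.eval x g = Fq (cOf g) (x 0) (x 1) := by
  classical
  set T : Finset (Fin 2 →₀ ℕ) :=
    (Finset.range 5).image (fun i => Finsupp.single 0 i + Finsupp.single 1 (4 - i)) with hT
  have hsub : g.support ⊆ T := by
    intro d hd
    have hcoeff : MvPolynomial.coeff d g ≠ 0 := MvPolynomial.mem_support_iff.1 hd
    have hdeg : d.degree = 4 := by
      by_contra hne
      exact hcoeff (hg.coeff_eq_zero hne)
    rw [fin2_degree] at hdeg
    rw [hT, Finset.mem_image]
    refine ⟨d 0, Finset.mem_range.2 (by omega), ?_⟩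
    rw [show 4 - d 0 = d 1 by omega]
    exact (fin2_eq d).symm
  have hinj : Set.InjOn (fun i => Finsupp.single (0 : Fin 2) i + Finsupp.single (1 : Fin 2) (4 - i))
      (Finset.range 5) := by
    intro i _ j _ hij
    have := congrFun (congrArg (fun f : Fin 2 →₀ ℕ => (f : Fin 2 → ℕ)) hij) 0
    simpa [Finsupp.single_apply] using this
  rw [MvPolynomial.eval_eq]
  rw [Finset.sum_subset hsub (fun d _ hd => by
    rw [MvPolynomial.notMem_support_iff.1 hd, zero_mul])]
  rw [hT, Finset.sum_image hinj]
  have hterm : ∀ i ∈ Finset.range 5,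
      MvPolynomial.coeff (Finsupp.single (0:Fin 2) i + Finsupp.single (1:Fin 2) (4 - i)) g *
        ∏ j ∈ (Finsupp.single (0:Fin 2) i + Finsupp.single (1:Fin 2) (4 - i)).support,
          x j ^ (Finsupp.single (0:Fin 2) i + Finsupp.single (1:Fin 2) (4 - i)) j
      = cOf g i * (x 0 ^ i * x 1 ^ (4 - i)) := by
    intro i _
    rw [cOf]
    congr 1
    rw [Finset.prod_subset (Finset.subset_univ _) (fun j _ hj => by
      rw [Finsupp.notMem_support_iff.1 hj, pow_zero])]
    rw [Fin.prod_univ_two]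
    simp [Finsupp.single_apply]
  rw [Finset.sum_congr rfl hterm]
  rw [Finset.sum_range_succ, Finset.sum_range_succ, Finset.sum_range_succ,
    Finset.sum_range_succ, Finset.sum_range_one]
  norm_num [Fq]
  ring

lemma G1_eq_Sq (g : MvPolynomial (Fin 2) ℝ) (hg : g.IsHomogeneous 4) :
    G1 g = Sq (cOf g) := by
  ext z
  show MvPolynomial.eval z g ≤ 1 ↔ Gq (cOf g) z ≤ 1
  rw [repr4 g hg z]
  rfl

def cvC (a b c : ℝ) : ℕ → ℝ := fun i =>
  if i = 4 then a else if i = 2 then 2*b else if i = 0 then c else 0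

lemma canon_eval (a b c : ℝ) (z : Fin 2 → ℝ) :
    MvPolynomial.eval z (canon a b c) = Gq (cvC a b c) z := by
  simp only [canon, Gq, Fq, cvC, map_add, map_mul, MvPolynomial.eval_C,
    MvPolynomial.eval_pow, MvPolynomial.eval_X]
  norm_num
  ring

lemma G1_canon_eq (a b c : ℝ) : G1 (canon a b c) = Sq (cvC a b c) := by
  ext z
  show MvPolynomial.eval z (canon a b c) ≤ 1 ↔ Gq (cvC a b c) z ≤ 1
  rw [canon_eval]

lemma pd_canon_iff (a b c : ℝ) :
    PD (cvC a b c) ↔ (0 < a ∧ 0 < c ∧ -Real.sqrt (a * c) < b) := by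
  have hGq : ∀ z : Fin 2 → ℝ, Gq (cvC a b c) z
      = c * (z 1)^4 + 2*b * ((z 0)^2 * (z 1)^2) + a * (z 0)^4 := by
    intro z
    simp only [Gq, Fq, cvC]
    norm_num
    ring
  constructor
  · intro h
    have ha : 0 < a := by
      have h10 : (![1, 0] : Fin 2 → ℝ) ≠ 0 := by
        intro hc
        have := congrFun hc 0
        norm_num at this
      have := h ![1, 0] h10
      rw [hGq] at this
      norm_num at this
      exact this
    have hc : 0 < c := by
      have h01 : (![0, 1] : Fin 2 → ℝ) ≠ 0 := by
        intro hc
        have := congrFun hc 1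
        norm_num at this
      have := h ![0, 1] h01
      rw [hGq] at this
      norm_num at this
      exact this
    refine ⟨ha, hc, ?_⟩
    set x : ℝ := Real.sqrt (Real.sqrt c) with hx
    set y : ℝ := Real.sqrt (Real.sqrt a) with hy
    have hxpos : 0 < x := Real.sqrt_pos.2 (Real.sqrt_pos.2 hc)
    have hypos : 0 < y := Real.sqrt_pos.2 (Real.sqrt_pos.2 ha)
    have hx2 : x^2 = Real.sqrt c := Real.sq_sqrt (Real.sqrt_nonneg c)
    have hy2 : y^2 = Real.sqrt a := Real.sq_sqrt (Real.sqrt_nonneg a)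
    have hx4 : x^4 = c := by
      rw [show x^4 = (x^2)^2 by ring, hx2]
      exact Real.sq_sqrt hc.le
    have hy4 : y^4 = a := by
      rw [show y^4 = (y^2)^2 by ring, hy2]
      exact Real.sq_sqrt ha.le
    have hxy : x^2 * y^2 = Real.sqrt (a*c) := by
      rw [hx2, hy2, ← Real.sqrt_mul hc.le, mul_comm c a]
    have hz : (![x, y] : Fin 2 → ℝ) ≠ 0 := by
      intro hc0
      have := congrFun hc0 0
      simp at this
      exact hxpos.ne' this
    have hval := h ![x, y] hz
    rw [hGq] at hval
    norm_num at hval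
    rw [hx4, hy4] at hval
    rw [show x^2 * y^2 = Real.sqrt (a*c) from hxy] at hval
    have hspos : 0 < Real.sqrt (a*c) := Real.sqrt_pos.2 (mul_pos ha hc)
    have hs2 : Real.sqrt (a*c) * Real.sqrt (a*c) = a*c :=
      Real.mul_self_sqrt (mul_pos ha hc).le
    by_contra hble
    push_neg at hble
    nlinarith [hval, hspos, hs2, hble]
  · rintro ⟨ha, hc, hb⟩ z hz
    rw [hGq]
    rw [ne_zero_iff] at hz
    have hs2 : Real.sqrt (a*c) ^ 2 = a*c := Real.sq_sqrt (mul_pos ha hc).le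
    have hsnn : 0 ≤ Real.sqrt (a*c) := Real.sqrt_nonneg _
    rcases le_or_gt 0 b with hbge | hblt
    · rcases hz with h0 | h1
      · have : 0 < (z 0)^4 := by positivity
        nlinarith [sq_nonneg (z 0 * z 1), pow_two_nonneg (z 1 ^ 2), sq_nonneg (z 1)]
      · have : 0 < (z 1)^4 := by positivity
        nlinarith [sq_nonneg (z 0 * z 1), pow_two_nonneg (z 0 ^ 2), sq_nonneg (z 0)]
    · have hb2 : b^2 < a*c := by nlinarith [hb, hsnn, hs2, hblt]
      rcases eq_or_ne (z 1) 0 with h1 | h1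
      · have h0 : z 0 ≠ 0 := by tauto
        rw [h1]
        have : 0 < (z 0)^4 := by positivity
        nlinarith
      · have h14 : 0 < (z 1)^4 := by positivity
        nlinarith [sq_nonneg (a * (z 0)^2 + b * (z 1)^2), mul_pos (mul_pos ha hc) h14,
          sq_nonneg (z 0 * z 1), mul_pos (sub_pos.2 hb2) h14]

theorem stmt_7 :
    (∀ g : MvPolynomial (Fin 2) ℝ, g.IsHomogeneous 4 →
      (volume (G1 g) < ⊤ ↔ Bornology.IsBounded (G1 g))) ∧
    (∀ g : MvPolynomial (Fin 2) ℝ, g.IsHomogeneous 4 → volume (G1 g) < ⊤ →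
      ∃ ε > (0 : ℝ), ∀ g' : MvPolynomial (Fin 2) ℝ, g'.IsHomogeneous 4 →
        (∀ α, |g'.coeff α - g.coeff α| < ε) → volume (G1 g') < ⊤) ∧
    (∀ a b c : ℝ,
      (volume (G1 (canon a b c)) < ⊤ ↔
        (0 < a ∧ 0 < c ∧ -Real.sqrt (a * c) < b)) ∧
      (volume (G1 (canon a b c)) < ⊤ ↔ Bornology.IsBounded (G1 (canon a b c)))) := by
  refine ⟨?_, ?_, ?_⟩
  · intro g hg
    rw [G1_eq_Sq g hg]
    exact pd_iff_fin.trans pd_iff_bdd.symm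
  · intro g hg hfin
    rw [G1_eq_Sq g hg] at hfin
    obtain ⟨ε, hε, hst⟩ := pd_open (pd_iff_fin.1 hfin)
    refine ⟨ε, hε, fun g' hg' hco => ?_⟩
    rw [G1_eq_Sq g' hg']
    apply pd_iff_fin.2
    apply hst
    intro i
    exact hco _
  · intro a b c
    rw [G1_canon_eq a b c]
    exact ⟨pd_iff_fin.trans (pd_canon_iff a b c), pd_iff_fin.trans pd_iff_bdd.symm⟩
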